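/- If f ∈ σ(N₁,N₂,N₃) with coefficients q(k,ℓ,m), then its Calderon transform (Cf)(x,y,z) = ∑_{|k|≤N₁,|ℓ|≤N₂,|m|≤N₃} q(k,ℓ,m)·(x+i)^{N₁+k}(x−i)^{N₁−k}(y+i)^{N₂+ℓ}(y−i)^{N₂−ℓ}(z+i)^{N₃+m}(z−i)^{N₃−m} takes only real values on ℝ³ and agrees on ℝ³ with a polynomial p ∈ ℝ[x,y,z] belonging to σ_P(2N₁,2N₂,2N₃), i.e., p has degree at most 2N₁ in x, 2N₂ in y, 2N₃ in z, and p(x,y,z) ≥ 0 for all real x,y,z. -/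

import Mathlib

open Complex ComplexOrder MvPolynomial

noncomputable section

/-- The lattice box `Δ(N₁,N₂,N₃)`. -/
def Dbox (N₁ N₂ N₃ : ℕ) : Finset (ℤ × ℤ × ℤ) :=
  Finset.Icc (-(N₁ : ℤ), -(N₂ : ℤ), -(N₃ : ℤ)) ((N₁ : ℤ), (N₂ : ℤ), (N₃ : ℤ))

/-- The character `exp(i(kα + ℓβ + mγ))`. -/
def eChar (δ : ℤ × ℤ × ℤ) (v : ℝ × ℝ × ℝ) : ℂ :=
  Complex.exp (Complex.I *
    ((δ.1 : ℂ) * (v.1 : ℂ) + (δ.2.1 : ℂ) * (v.2.1 : ℂ) + (δ.2.2 : ℂ) * (v.2.2 : ℂ)))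

/-- The summand `(x+i)^{N₁+k}(x−i)^{N₁−k}(y+i)^{N₂+ℓ}(y−i)^{N₂−ℓ}(z+i)^{N₃+m}(z−i)^{N₃−m}` of
the Calderon transform. -/
def calderonTerm (N₁ N₂ N₃ : ℕ) (δ : ℤ × ℤ × ℤ) (x y z : ℝ) : ℂ :=
  ((x : ℂ) + Complex.I) ^ (((N₁ : ℤ) + δ.1).toNat) * ((x : ℂ) - Complex.I) ^ (((N₁ : ℤ) - δ.1).toNat) *
  ((y : ℂ) + Complex.I) ^ (((N₂ : ℤ) + δ.2.1).toNat) * ((y : ℂ) - Complex.I) ^ (((N₂ : ℤ) - δ.2.1).toNat) *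
  ((z : ℂ) + Complex.I) ^ (((N₃ : ℤ) + δ.2.2).toNat) * ((z : ℂ) - Complex.I) ^ (((N₃ : ℤ) - δ.2.2).toNat)

lemma mem_Dbox {N₁ N₂ N₃ : ℕ} {δ : ℤ × ℤ × ℤ} (h : δ ∈ Dbox N₁ N₂ N₃) :
    -(N₁:ℤ) ≤ δ.1 ∧ δ.1 ≤ N₁ ∧ -(N₂:ℤ) ≤ δ.2.1 ∧ δ.2.1 ≤ N₂ ∧
      -(N₃:ℤ) ≤ δ.2.2 ∧ δ.2.2 ≤ N₃ := by
  simp only [Dbox, Finset.mem_Icc, Prod.le_def] at h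
  tauto

lemma xpI_ne (x : ℝ) : (x:ℂ) + I ≠ 0 := by
  intro h
  have := congrArg Complex.im h
  simp at this

lemma xmI_ne (x : ℝ) : (x:ℂ) - I ≠ 0 := by
  intro h
  have := congrArg Complex.im h
  simp at this

lemma exp_arg_div (x : ℝ) :
    Complex.exp ((((x:ℂ)+I)/((x:ℂ)-I)).arg * I) = ((x:ℂ)+I)/((x:ℂ)-I) := by
  have habs : ‖((x:ℂ)+I)/((x:ℂ)-I)‖ = 1 := by
    have : ((starRingEnd ℂ) ((x:ℂ)+I)) = (x:ℂ) - I := by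
      simp [sub_eq_add_neg]
    rw [norm_div, ← this, Complex.norm_conj, div_self]
    simpa [this] using (norm_ne_zero_iff.mpr (xpI_ne x))
  have := Complex.norm_mul_exp_arg_mul_I (((x:ℂ)+I)/((x:ℂ)-I))
  rwa [habs, Complex.ofReal_one, one_mul] at this

lemma onevar (N : ℕ) (k : ℤ) (hk : -(N:ℤ) ≤ k) (hk' : k ≤ N) (x : ℝ) :
    ((x:ℂ)+I) ^ (((N:ℤ)+k).toNat) * ((x:ℂ)-I) ^ (((N:ℤ)-k).toNat)
      = Complex.exp (I * (k * ((((x:ℂ)+I)/((x:ℂ)-I)).arg : ℂ)))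
        * (((x:ℝ)^2+1 : ℝ) : ℂ) ^ N := by
  have h1 := xpI_ne x
  have h2 := xmI_ne x
  have hexp : Complex.exp (I * (k * ((((x:ℂ)+I)/((x:ℂ)-I)).arg : ℂ)))
      = (((x:ℂ)+I)/((x:ℂ)-I)) ^ k := by
    conv_rhs => rw [← exp_arg_div x]
    rw [← Complex.exp_int_mul]
    congr 1
    ring
  rw [hexp]
  have e1 : ((x:ℂ)+I) ^ (((N:ℤ)+k).toNat) = ((x:ℂ)+I) ^ ((N:ℤ)+k) := by
    rw [← zpow_natCast, Int.toNat_of_nonneg (by omega)]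
  have e2 : ((x:ℂ)-I) ^ (((N:ℤ)-k).toNat) = ((x:ℂ)-I) ^ ((N:ℤ)-k) := by
    rw [← zpow_natCast, Int.toNat_of_nonneg (by omega)]
  have hprod : ((x:ℂ)+I) * ((x:ℂ)-I) = (((x:ℝ)^2+1 : ℝ) : ℂ) := by
    push_cast
    linear_combination (-1 : ℂ) * Complex.I_sq
  rw [e1, e2, zpow_add₀ h1, zpow_sub₀ h2, zpow_natCast, zpow_natCast, div_zpow,
    ← hprod, mul_pow]
  ring

lemma calderonTerm_eq (N₁ N₂ N₃ : ℕ) {δ : ℤ × ℤ × ℤ} (hδ : δ ∈ Dbox N₁ N₂ N₃) (x y z : ℝ) :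
    calderonTerm N₁ N₂ N₃ δ x y z
      = eChar δ ((((x:ℂ)+I)/((x:ℂ)-I)).arg, (((y:ℂ)+I)/((y:ℂ)-I)).arg,
          (((z:ℂ)+I)/((z:ℂ)-I)).arg)
        * ((((x:ℝ)^2+1)^N₁ * ((y:ℝ)^2+1)^N₂ * ((z:ℝ)^2+1)^N₃ : ℝ) : ℂ) := by
  obtain ⟨h1, h2, h3, h4, h5, h6⟩ := mem_Dbox hδ
  have e1 := onevar N₁ δ.1 h1 h2 x
  have e2 := onevar N₂ δ.2.1 h3 h4 y
  have e3 := onevar N₃ δ.2.2 h5 h6 z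
  set a₁ : ℂ := ((((x:ℂ)+I)/((x:ℂ)-I)).arg : ℂ)
  set a₂ : ℂ := ((((y:ℂ)+I)/((y:ℂ)-I)).arg : ℂ)
  set a₃ : ℂ := ((((z:ℂ)+I)/((z:ℂ)-I)).arg : ℂ)
  calc calderonTerm N₁ N₂ N₃ δ x y z
      = (((x:ℂ)+I) ^ (((N₁:ℤ)+δ.1).toNat) * ((x:ℂ)-I) ^ (((N₁:ℤ)-δ.1).toNat))
        * (((y:ℂ)+I) ^ (((N₂:ℤ)+δ.2.1).toNat) * ((y:ℂ)-I) ^ (((N₂:ℤ)-δ.2.1).toNat))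
        * (((z:ℂ)+I) ^ (((N₃:ℤ)+δ.2.2).toNat) * ((z:ℂ)-I) ^ (((N₃:ℤ)-δ.2.2).toNat)) := by
        unfold calderonTerm; ring
    _ = (Complex.exp (I * (δ.1 * a₁)) * (((x:ℝ)^2+1 : ℝ) : ℂ) ^ N₁)
        * (Complex.exp (I * (δ.2.1 * a₂)) * (((y:ℝ)^2+1 : ℝ) : ℂ) ^ N₂)
        * (Complex.exp (I * (δ.2.2 * a₃)) * (((z:ℝ)^2+1 : ℝ) : ℂ) ^ N₃) := by
        rw [e1, e2, e3]
    _ = _ := by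
        unfold eChar
        rw [show I * ((δ.1:ℂ) * a₁ + (δ.2.1:ℂ) * a₂ + (δ.2.2:ℂ) * a₃)
            = I * ((δ.1:ℂ) * a₁) + (I * ((δ.2.1:ℂ) * a₂) + I * ((δ.2.2:ℂ) * a₃)) from by ring,
          Complex.exp_add, Complex.exp_add]
        push_cast
        ring


lemma deg_lin_le (i j : Fin 3) (c : ℂ) :
    degreeOf i ((X j + C c : MvPolynomial (Fin 3) ℂ)) ≤ if i = j then 1 else 0 := by
  refine le_trans (degreeOf_add_le _ _ _) ?_
  simp [degreeOf_X]

lemma deg_pow_le (i j : Fin 3) (c : ℂ) (n : ℕ) :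
    degreeOf i ((X j + C c : MvPolynomial (Fin 3) ℂ) ^ n) ≤ if i = j then n else 0 := by
  rcases eq_or_ne i j with h | h
  · subst h
    simp only [if_pos rfl]
    refine le_trans (degreeOf_pow_le _ _ _) ?_
    have h1 : degreeOf i (X i + C c : MvPolynomial (Fin 3) ℂ) ≤ 1 := by
      simpa using deg_lin_le i i c
    calc n * degreeOf i (X i + C c : MvPolynomial (Fin 3) ℂ) ≤ n * 1 :=
          Nat.mul_le_mul_left n h1
      _ = n := Nat.mul_one n
  · simp only [if_neg h]
    refine le_trans (degreeOf_pow_le _ _ _) ?_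
    have h1 : degreeOf i (X j + C c : MvPolynomial (Fin 3) ℂ) ≤ 0 := by
      simpa [h] using deg_lin_le i j c
    simp [Nat.le_zero.mp h1]

lemma deg_term_le (i : Fin 3) (a : ℂ) (p₁ p₂ p₃ p₄ p₅ p₆ : MvPolynomial (Fin 3) ℂ)
    {d₁ d₂ d₃ d₄ d₅ d₆ : ℕ} (h₁ : degreeOf i p₁ ≤ d₁) (h₂ : degreeOf i p₂ ≤ d₂)
    (h₃ : degreeOf i p₃ ≤ d₃) (h₄ : degreeOf i p₄ ≤ d₄) (h₅ : degreeOf i p₅ ≤ d₅)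
    (h₆ : degreeOf i p₆ ≤ d₆) :
    degreeOf i (C a * p₁ * p₂ * p₃ * p₄ * p₅ * p₆) ≤ d₁ + d₂ + d₃ + d₄ + d₅ + d₆ := by
  have t1 : degreeOf i (C a * p₁) ≤ d₁ := by
    refine le_trans (degreeOf_mul_le _ _ _) ?_
    simp [h₁]
  have t2 : degreeOf i (C a * p₁ * p₂) ≤ d₁ + d₂ :=
    le_trans (degreeOf_mul_le _ _ _) (add_le_add t1 h₂)
  have t3 : degreeOf i (C a * p₁ * p₂ * p₃) ≤ d₁ + d₂ + d₃ :=
    le_trans (degreeOf_mul_le _ _ _) (add_le_add t2 h₃)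
  have t4 : degreeOf i (C a * p₁ * p₂ * p₃ * p₄) ≤ d₁ + d₂ + d₃ + d₄ :=
    le_trans (degreeOf_mul_le _ _ _) (add_le_add t3 h₄)
  have t5 : degreeOf i (C a * p₁ * p₂ * p₃ * p₄ * p₅) ≤ d₁ + d₂ + d₃ + d₄ + d₅ :=
    le_trans (degreeOf_mul_le _ _ _) (add_le_add t4 h₅)
  exact le_trans (degreeOf_mul_le _ _ _) (add_le_add t5 h₆)

/-- The Calderon polynomial over `ℂ`. -/
def CP (N₁ N₂ N₃ : ℕ) (q : ℤ × ℤ × ℤ → ℂ) : MvPolynomial (Fin 3) ℂ :=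
  ∑ δ ∈ Dbox N₁ N₂ N₃,
    C (q δ) * (X 0 + C I) ^ (((N₁:ℤ) + δ.1).toNat) * (X 0 + C (-I)) ^ (((N₁:ℤ) - δ.1).toNat)
      * (X 1 + C I) ^ (((N₂:ℤ) + δ.2.1).toNat) * (X 1 + C (-I)) ^ (((N₂:ℤ) - δ.2.1).toNat)
      * (X 2 + C I) ^ (((N₃:ℤ) + δ.2.2).toNat) * (X 2 + C (-I)) ^ (((N₃:ℤ) - δ.2.2).toNat)

lemma degreeOf_CP₀ (N₁ N₂ N₃ : ℕ) (q : ℤ × ℤ × ℤ → ℂ) :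
    degreeOf 0 (CP N₁ N₂ N₃ q) ≤ 2 * N₁ := by
  refine le_trans (degreeOf_sum_le _ _ _) (Finset.sup_le fun δ hδ => ?_)
  obtain ⟨h1, h2, _, _, _, _⟩ := mem_Dbox hδ
  refine le_trans (deg_term_le 0 _ _ _ _ _ _ _
    (deg_pow_le 0 0 I _) (deg_pow_le 0 0 (-I) _)
    (deg_pow_le 0 1 I _) (deg_pow_le 0 1 (-I) _)
    (deg_pow_le 0 2 I _) (deg_pow_le 0 2 (-I) _)) ?_
  simp only [reduceIte, show ((0:Fin 3) = 1) ↔ False from by decide,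
    show ((0:Fin 3) = 2) ↔ False from by decide, if_false, if_pos rfl, eq_self_iff_true, if_true]
  omega

lemma degreeOf_CP₁ (N₁ N₂ N₃ : ℕ) (q : ℤ × ℤ × ℤ → ℂ) :
    degreeOf 1 (CP N₁ N₂ N₃ q) ≤ 2 * N₂ := by
  refine le_trans (degreeOf_sum_le _ _ _) (Finset.sup_le fun δ hδ => ?_)
  obtain ⟨_, _, h3, h4, _, _⟩ := mem_Dbox hδ
  refine le_trans (deg_term_le 1 _ _ _ _ _ _ _
    (deg_pow_le 1 0 I _) (deg_pow_le 1 0 (-I) _)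
    (deg_pow_le 1 1 I _) (deg_pow_le 1 1 (-I) _)
    (deg_pow_le 1 2 I _) (deg_pow_le 1 2 (-I) _)) ?_
  simp only [show ((1:Fin 3) = 0) ↔ False from by decide,
    show ((1:Fin 3) = 2) ↔ False from by decide, if_false, if_pos rfl, eq_self_iff_true, if_true]
  omega

lemma degreeOf_CP₂ (N₁ N₂ N₃ : ℕ) (q : ℤ × ℤ × ℤ → ℂ) :
    degreeOf 2 (CP N₁ N₂ N₃ q) ≤ 2 * N₃ := by
  refine le_trans (degreeOf_sum_le _ _ _) (Finset.sup_le fun δ hδ => ?_)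
  obtain ⟨_, _, _, _, h5, h6⟩ := mem_Dbox hδ
  refine le_trans (deg_term_le 2 _ _ _ _ _ _ _
    (deg_pow_le 2 0 I _) (deg_pow_le 2 0 (-I) _)
    (deg_pow_le 2 1 I _) (deg_pow_le 2 1 (-I) _)
    (deg_pow_le 2 2 I _) (deg_pow_le 2 2 (-I) _)) ?_
  simp only [show ((2:Fin 3) = 0) ↔ False from by decide,
    show ((2:Fin 3) = 1) ↔ False from by decide, if_false, if_pos rfl, eq_self_iff_true, if_true]
  omega

lemma eval_CP (N₁ N₂ N₃ : ℕ) (q : ℤ × ℤ × ℤ → ℂ) (x y z : ℝ) :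
    eval ![(x:ℂ), (y:ℂ), (z:ℂ)] (CP N₁ N₂ N₃ q)
      = ∑ δ ∈ Dbox N₁ N₂ N₃, q δ * calderonTerm N₁ N₂ N₃ δ x y z := by
  unfold CP
  rw [map_sum]
  refine Finset.sum_congr rfl fun δ hδ => ?_
  simp only [map_mul, map_pow, map_add, eval_X, eval_C, Matrix.cons_val_zero,
    Matrix.cons_val_one, Matrix.head_cons, Matrix.cons_val_two, Matrix.tail_cons,
    calderonTerm]
  ring

theorem placeholder : True := trivial

/-- Half of Proposition 5: if `f ∈ σ(N₁,N₂,N₃)` has coefficients `q`, then its Calderon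
transform `(Cf)(x,y,z) = ∑_{δ ∈ Δ} q(δ) · calderonTerm` agrees on `ℝ³` with a real polynomial
`p` of degree at most `2Nᵢ` in each variable which is nonnegative on `ℝ³`, i.e.
`p ∈ σ_P(2N₁,2N₂,2N₃)`. -/
theorem calderon_maps_sigma_into_sigmaP (N₁ N₂ N₃ : ℕ) (q : ℤ × ℤ × ℤ → ℂ)
    (f : ℝ × ℝ × ℝ → ℂ) (hf : f = fun v => ∑ δ ∈ Dbox N₁ N₂ N₃, q δ * eChar δ v)
    (hpos : ∀ v, 0 ≤ f v) :
    ∃ p : MvPolynomial (Fin 3) ℝ,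
      p.degreeOf 0 ≤ 2 * N₁ ∧ p.degreeOf 1 ≤ 2 * N₂ ∧ p.degreeOf 2 ≤ 2 * N₃ ∧
      (∀ x y z : ℝ,
        (∑ δ ∈ Dbox N₁ N₂ N₃, q δ * calderonTerm N₁ N₂ N₃ δ x y z)
          = ((eval ![x, y, z] p : ℝ) : ℂ)) ∧
      (∀ x y z : ℝ, 0 ≤ eval ![x, y, z] p) := by
  classical
  set P : MvPolynomial (Fin 3) ℂ := CP N₁ N₂ N₃ q with hP
  set p : MvPolynomial (Fin 3) ℝ := ∑ s ∈ P.support, monomial s ((P.coeff s).re) with hp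
  have hpdeg : ∀ i : Fin 3, degreeOf i p ≤ degreeOf i P := by
    intro i
    refine le_trans (degreeOf_sum_le _ _ _) (Finset.sup_le fun s hs => ?_)
    have h1 : degreeOf i (monomial s ((P.coeff s).re)) ≤ s i := by
      rcases eq_or_ne ((P.coeff s).re) 0 with h | h
      · simp [h]
      · rw [degreeOf_monomial_eq _ _ h]
    exact le_trans h1 (monomial_le_degreeOf i hs)
  have main : ∀ x y z : ℝ,
      (∑ δ ∈ Dbox N₁ N₂ N₃, q δ * calderonTerm N₁ N₂ N₃ δ x y z)
        = ((eval ![x, y, z] p : ℝ) : ℂ) ∧ 0 ≤ eval ![x, y, z] p := by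
    intro x y z
    set v : ℝ × ℝ × ℝ := ((((x:ℂ)+I)/((x:ℂ)-I)).arg, (((y:ℂ)+I)/((y:ℂ)-I)).arg,
      (((z:ℂ)+I)/((z:ℂ)-I)).arg) with hv
    have hfv := hpos v
    rw [Complex.nonneg_iff] at hfv
    have hfvr : f v = ((f v).re : ℂ) :=
      Complex.ext (by simp) (by simp [← hfv.2])
    -- the sum equals a nonnegative real
    have hsum : (∑ δ ∈ Dbox N₁ N₂ N₃, q δ * calderonTerm N₁ N₂ N₃ δ x y z)
        = (((f v).re * (((x:ℝ)^2+1)^N₁ * ((y:ℝ)^2+1)^N₂ * ((z:ℝ)^2+1)^N₃) : ℝ) : ℂ) := by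
      have h1 : ∑ δ ∈ Dbox N₁ N₂ N₃, q δ * calderonTerm N₁ N₂ N₃ δ x y z
          = (∑ δ ∈ Dbox N₁ N₂ N₃, q δ * eChar δ v)
            * (((((x:ℝ)^2+1)^N₁ * ((y:ℝ)^2+1)^N₂ * ((z:ℝ)^2+1)^N₃ : ℝ)) : ℂ) := by
        rw [Finset.sum_mul]
        refine Finset.sum_congr rfl fun δ hδ => ?_
        rw [calderonTerm_eq N₁ N₂ N₃ hδ x y z, ← hv]
        ring
      have h2 : (∑ δ ∈ Dbox N₁ N₂ N₃, q δ * eChar δ v) = f v := by rw [hf]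
      rw [h1, h2]
      conv_lhs => rw [hfvr]
      push_cast
      ring
    -- evaluation of p
    have hvec : (fun i => ((![x, y, z] i : ℝ) : ℂ)) = ![(x:ℂ), (y:ℂ), (z:ℂ)] := by
      funext i
      fin_cases i <;> simp
    have hZ : eval (fun i => ((![x, y, z] i : ℝ) : ℂ)) P
        = (((f v).re * (((x:ℝ)^2+1)^N₁ * ((y:ℝ)^2+1)^N₂ * ((z:ℝ)^2+1)^N₃) : ℝ) : ℂ) := by
      rw [hvec, hP, eval_CP, hsum]
    have hL : eval ![x, y, z] p
        = ∑ s ∈ P.support, (P.coeff s).re * ∏ i, ![x, y, z] i ^ s i := by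
      rw [hp, map_sum]
      exact Finset.sum_congr rfl fun s _ => by rw [eval_monomial, Finsupp.prod_pow]
    have hR : (eval (fun i => ((![x, y, z] i : ℝ) : ℂ)) P).re
        = ∑ s ∈ P.support, (P.coeff s).re * ∏ i, ![x, y, z] i ^ s i := by
      rw [eval_eq', Complex.re_sum]
      refine Finset.sum_congr rfl fun s _ => ?_
      have hprod : (∏ i, ((![x, y, z] i : ℝ) : ℂ) ^ s i)
          = ((∏ i, ![x, y, z] i ^ s i : ℝ) : ℂ) := by
        push_cast
        rfl
      rw [hprod, Complex.mul_re, Complex.ofReal_re, Complex.ofReal_im]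
      ring
    have hep : eval ![x, y, z] p
        = (f v).re * (((x:ℝ)^2+1)^N₁ * ((y:ℝ)^2+1)^N₂ * ((z:ℝ)^2+1)^N₃) := by
      rw [hL, ← hR, hZ, Complex.ofReal_re]
    constructor
    · rw [hsum, hep]
    · rw [hep]
      have : (0:ℝ) ≤ (((x:ℝ)^2+1)^N₁ * ((y:ℝ)^2+1)^N₂ * ((z:ℝ)^2+1)^N₃) := by positivity
      exact mul_nonneg hfv.1 this
  exact ⟨p, le_trans (hpdeg 0) (degreeOf_CP₀ N₁ N₂ N₃ q),
    le_trans (hpdeg 1) (degreeOf_CP₁ N₁ N₂ N₃ q),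
    le_trans (hpdeg 2) (degreeOf_CP₂ N₁ N₂ N₃ q),
    fun x y z => (main x y z).1, fun x y z => (main x y z).2⟩
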